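/- For any digraph G, the order of a maximum induced acyclic sub-digraph of G is a lower bound on the minimum length of a scalar linear index code over F_q for the single unicast index coding problem defined by G: l ≥ MAIS(G). -/

import Mathlib

/-- MAIS lower bound. For the single unicast index coding problem with
side-information digraph `E` on `Fin N`, any valid scalar linear index code of length `l`
over a field `F` satisfies `l ≥ MAIS(G)`: for every vertex set `S` inducing an acyclic
sub-digraph, `S.card ≤ l`. -/
theorem mais_lower_bound
    {F : Type*} [Field F] {N l : ℕ}
    (E : Fin N → Fin N → Prop)
    (Enc : (Fin N → F) →ₗ[F] (Fin l → F))
    (Dec : ∀ i : Fin N, (Fin l → F) → ({j : Fin N // E i j} → F) → F)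
    (hDec : ∀ (x : Fin N → F) (i : Fin N),
      Dec i (Enc x) (fun j => x j.1) = x i)
    (S : Finset (Fin N))
    (hS : ∀ (v : Fin N) (p : List (Fin N)), v ∈ S → (∀ u ∈ p, u ∈ S) →
      ¬ List.Chain E v (p ++ [v])) :
    S.card ≤ l := by
  classical
  -- extension map from functions on S to functions on Fin N
  let ext : (↥S → F) →ₗ[F] (Fin N → F) :=
    { toFun := fun x j => if h : j ∈ S then x ⟨j, h⟩ else 0
      map_add' := by
        intro x y; funext j; by_cases h : j ∈ S <;> simp [h]
      map_smul' := by
        intro c x; funext j; by_cases h : j ∈ S <;> simp [h] }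
  -- dependency relation on S
  let r : ↥S → ↥S → Prop := fun a b => E b.1 a.1
  -- r has no cycles: its transitive closure is irreflexive
  have hirr : ∀ a : ↥S, ¬ Relation.TransGen r a a := by
    have key : ∀ a b : ↥S, Relation.TransGen r a b →
        ∃ p : List (Fin N), (∀ u ∈ p, u ∈ S) ∧ List.Chain E b.1 (p ++ [a.1]) := by
      intro a b h
      induction h with
      | single hstep => exact ⟨[], by simp, by simpa using List.Chain.cons (R := E) hstep List.Chain.nil⟩
      | tail _ hstep ih =>
        obtain ⟨p, hp, hchain⟩ := ih
        rename_i b c _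
        exact ⟨b.1 :: p, by
          intro u hu
          rcases List.mem_cons.mp hu with h | h
          · exact h ▸ b.2
          · exact hp u h, List.Chain.cons hstep hchain⟩
    intro a h
    obtain ⟨p, hp, hchain⟩ := key a a h
    exact hS a.1 p a.2 hp hchain
  have hwf : WellFounded r := by
    have : WellFounded (Relation.TransGen r) := by
      have : IsIrrefl ↥S (Relation.TransGen r) := ⟨hirr⟩
      exact Finite.wellFounded_of_trans_of_irrefl _
    exact Subrelation.wf (fun h => Relation.TransGen.single h) this
  -- injectivity of Enc ∘ ext
  have hinj : Function.Injective (Enc.comp ext) := by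
    rw [← LinearMap.ker_eq_bot, LinearMap.ker_eq_bot']
    intro x hx
    have hx' : Enc (ext x) = 0 := hx
    have hzero : ∀ a : ↥S, x a = 0 := by
      intro a
      induction a using WellFounded.induction hwf with
      | _ a ih =>
        have hside : (fun j : {j : Fin N // E a.1 j} => ext x j.1)
            = (fun j : {j : Fin N // E a.1 j} => (0 : Fin N → F) j.1) := by
          funext j
          by_cases h : j.1 ∈ S
          · have := ih ⟨j.1, h⟩ j.2
            simp only [ext, LinearMap.coe_mk, AddHom.coe_mk, dif_pos h, this, Pi.zero_apply]
          · simp only [ext, LinearMap.coe_mk, AddHom.coe_mk, dif_neg h, Pi.zero_apply]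
        have h1 := hDec (ext x) a.1
        have h2 := hDec (0 : Fin N → F) a.1
        rw [hside, hx', ← map_zero Enc] at h1
        have : ext x a.1 = (0 : Fin N → F) a.1 := by rw [← h1, ← h2]
        simpa [ext, a.2] using this
    funext a
    exact hzero a
  have h1 : Module.finrank F (↥S → F) ≤ Module.finrank F (Fin l → F) :=
    LinearMap.finrank_le_finrank_of_injective hinj
  simpa [Module.finrank_pi, Fintype.card_coe] using h1
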